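/- Let n ≥ 3 and let u be a word in x_1,...,x_n in which every variable occurs exactly twice, such that u[x_1,x_2,x_3] = (x_2 x_3 x_1)(x_3 x_1 x_2), and: for each odd 1 ≤ i < n, u[x_i,x_{i+1}] = x_{i+1} x_i² x_{i+1}; for each even 2 ≤ i < n, u[x_i,x_{i+1}] = x_i x_{i+1}² x_i; for each 1 ≤ i < j ≤ n with j−i ∈ {2,3}, u[x_i,x_j] ∈ {x_i x_j x_i x_j, x_j x_i x_j x_i}; and for each odd 3 ≤ j ≤ n, u[x_1,x_j] ∈ {x_1 x_j x_1 x_j, x_j x_1 x_j x_1}. Then u equals the word S_n. -/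

import Mathlib

/-- Insert `x` right after the first letter of a list. -/
def insert2 (x : ℕ) : List ℕ → List ℕ
  | [] => [x]
  | a :: t => a :: x :: t

/-- The two linear parts of the double-linear word `S n`:
`S 1 = x₁²`; for odd `k`, `x_{k+1}` is prepended to the first part and inserted after
the first letter of the second part; for even `k`, vice versa. -/
def sPair : ℕ → List ℕ × List ℕ
  | 0 => ([], [])
  | 1 => ([1], [1])
  | (k+2) =>
    let p := sPair (k+1)
    if (k+1) % 2 = 1 then ((k+2) :: p.1, insert2 (k+2) p.2)
    else (insert2 (k+2) p.1, (k+2) :: p.2)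

/-- The word `S n`, e.g. `S 8 = (x₈x₆x₇x₄x₅x₂x₃x₁)(x₇x₈x₅x₆x₃x₄x₁x₂)`. -/
def sW (n : ℕ) : List ℕ := (sPair n).1 ++ (sPair n).2

/-- Projection of a word to the two variables `i`, `j` (deleting all other letters). -/
def proj2 (u : List ℕ) (i j : ℕ) : List ℕ := u.filter (fun a => a == i || a == j)

lemma split_unique {n : ℕ} : ∀ {A B s t : List ℕ}, n ∉ A → n ∉ B →
    A ++ n :: s = B ++ n :: t → A = B ∧ s = t := by
  intro A
  induction A with
  | nil =>
    intro B s t _ hB h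
    cases B with
    | nil => simpa using h
    | cons b B' =>
      simp only [List.nil_append, List.cons_append, List.cons.injEq] at h
      exact (hB (h.1 ▸ (List.mem_cons_self (a := b) (l := B')))).elim
  | cons a A' ih =>
    intro B s t hA hB h
    cases B with
    | nil =>
      simp only [List.cons_append, List.nil_append, List.cons.injEq] at h
      exact (hA (h.1 ▸ (List.mem_cons_self (a := a) (l := A')))).elim
    | cons b B' =>
      simp only [List.cons_append, List.cons.injEq] at h
      obtain ⟨rfl, h2⟩ := h
      have := ih (fun hm => hA (List.mem_cons_of_mem _ hm)) (fun hm => hB (List.mem_cons_of_mem _ hm)) h2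
      exact ⟨by rw [this.1], this.2⟩

lemma piece_split {n : ℕ} {fA fB fC w₁ w₂ w₃ : List ℕ} (hA : n ∉ fA) (h1 : n ∉ w₁)
    (hB : n ∉ fB) (h2 : n ∉ w₂)
    (heq : fA ++ n :: (fB ++ n :: fC) = w₁ ++ n :: (w₂ ++ n :: w₃)) :
    fA = w₁ ∧ fB = w₂ ∧ fC = w₃ := by
  obtain ⟨e1, e2⟩ := split_unique hA h1 heq
  obtain ⟨e3, e4⟩ := split_unique hB h2 e2
  exact ⟨e1, e3, e4⟩

lemma count_one_split {x : ℕ} : ∀ {l : List ℕ}, l.count x = 1 →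
    ∃ B C, l = B ++ x :: C ∧ x ∉ B ∧ x ∉ C := by
  intro l
  induction l with
  | nil => simp
  | cons a t ih =>
    intro h
    rw [List.count_cons] at h
    by_cases hax : a = x
    · subst hax
      simp at h
      refine ⟨[], t, by simp, by simp, ?_⟩
      simp [← List.count_pos_iff, h]
    · have : t.count x = 1 := by simpa [hax] using h
      obtain ⟨B, C, rfl, hB, hC⟩ := ih this
      exact ⟨a :: B, C, by simp, by simp [Ne.symm hax, hB], hC⟩

lemma count_two_split {x : ℕ} : ∀ {l : List ℕ}, l.count x = 2 →
    ∃ A B C, l = A ++ x :: (B ++ x :: C) ∧ x ∉ A ∧ x ∉ B ∧ x ∉ C := by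
  intro l
  induction l with
  | nil => simp
  | cons a t ih =>
    intro h
    rw [List.count_cons] at h
    by_cases hax : a = x
    · subst hax
      simp at h
      obtain ⟨B, C, rfl, hB, hC⟩ := count_one_split h
      exact ⟨[], B, C, by simp, by simp, hB, hC⟩
    · have : t.count x = 2 := by simpa [hax] using h
      obtain ⟨A, B, C, rfl, hA, hB, hC⟩ := ih this
      exact ⟨a :: A, B, C, by simp, by simp [Ne.symm hax, hA], hB, hC⟩

lemma suffix_past {v : ℕ} : ∀ {X : List ℕ} {C Y : List ℕ}, C <:+ X ++ v :: Y → v ∉ C → C <:+ Y := by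
  intro X
  induction X with
  | nil =>
    intro C Y h hv
    rw [List.nil_append, List.suffix_cons_iff] at h
    rcases h with rfl | h
    · exact absurd List.mem_cons_self hv
    · exact h
  | cons x X' ih =>
    intro C Y h hv
    rw [List.cons_append, List.suffix_cons_iff] at h
    rcases h with rfl | h
    · exact absurd (by simp) hv
    · exact ih h hv

lemma last_mem_of_suffix {E X : List ℕ} {v : ℕ} (h : E <:+ X ++ [v]) (hne : E ≠ []) : v ∈ E := by
  obtain ⟨D, hD⟩ := h
  have h1 : E.getLast hne = v := by
    have : (D ++ E).getLast (by simp [hne]) = (X ++ [v]).getLast (by simp) := by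
      congr 1
    rw [List.getLast_append_right (l := D) hne] at this
    rw [this]
    simp [List.getLast_append]
  rw [← h1]
  exact List.getLast_mem hne

lemma mem_insert2 {x v : ℕ} {l : List ℕ} : x ∈ insert2 v l ↔ x = v ∨ x ∈ l := by
  cases l with
  | nil => simp [insert2]
  | cons a t => simp [insert2]; tauto

lemma sPair_succ (m : ℕ) (h : 1 ≤ m) : sPair (m+1) =
    if m % 2 = 1 then ((m+1) :: (sPair m).1, insert2 (m+1) (sPair m).2)
    else (insert2 (m+1) (sPair m).1, (m+1) :: (sPair m).2) := by
  obtain ⟨k, rfl⟩ : ∃ k, m = k + 1 := ⟨m - 1, by omega⟩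
  rfl

lemma sPair_le : ∀ m x : ℕ, (x ∈ (sPair m).1 ∨ x ∈ (sPair m).2) → x ≤ m := by
  intro m
  induction m using Nat.strong_induction_on with
  | _ m ih =>
    match m with
    | 0 => intro x hx; simp [sPair] at hx
    | 1 => intro x hx; simp [sPair] at hx; omega
    | (k+2) =>
      intro x hx
      have hs := sPair_succ (k+1) (by omega)
      rw [hs] at hx
      have ihk := ih (k+1) (by omega) x
      by_cases hp : (k+1) % 2 = 1
      · rw [if_pos hp] at hx
        simp only [List.mem_cons, mem_insert2] at hx
        rcases hx with (hx | hx) | (hx | hx)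
        · omega
        · have := ihk (Or.inl hx); omega
        · omega
        · have := ihk (Or.inr hx); omega
      · rw [if_neg hp] at hx
        simp only [List.mem_cons, mem_insert2] at hx
        rcases hx with (hx | hx) | (hx | hx)
        · omega
        · have := ihk (Or.inl hx); omega
        · omega
        · have := ihk (Or.inr hx); omega

def FactOdd (m : ℕ) : Prop := ∃ F Q', sPair m = ((m-1) :: m :: (F ++ [1]), m :: (m-2) :: (m-1) :: Q')
  ∧ m ∉ F ∧ (m-1) ∉ F ∧ m ∉ Q' ∧ (m-1) ∉ Q' ∧ (m-2) ∉ Q' ∧ 1 ∈ (m-2) :: (m-1) :: Q'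

def FactEven (m : ℕ) : Prop := ∃ F G, sPair m = (m :: (m-2) :: (m-1) :: (F ++ [1]), (m-1) :: m :: G)
  ∧ m ∉ F ∧ (m-1) ∉ F ∧ m ∉ G ∧ (m-1) ∉ G ∧ (m-2) ∈ G ∧ 1 ∈ G

lemma facts : ∀ m : ℕ, 3 ≤ m → (m % 2 = 1 → FactOdd m) ∧ (m % 2 = 0 → FactEven m) := by
  intro m hm
  induction m, hm using Nat.le_induction with
  | base =>
    constructor
    · intro _
      exact ⟨[], [], by decide, by simp, by simp, by simp, by simp, by simp, by decide⟩
    · intro h; omega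
  | succ m hm ih =>
    have hs := sPair_succ m (by omega)
    constructor
    · -- m+1 odd, m even ≥ 4
      intro hpar
      have hme : m % 2 = 0 := by omega
      obtain ⟨F, G, heq, f1, f2, f3, f4, f5, f6⟩ := ih.2 hme
      rw [hme] at hs; simp only [if_neg (by omega : ¬ (0:ℕ) = 1)] at hs
      refine ⟨(m-2) :: (m-1) :: F, G, ?_, ?_, ?_, ?_, ?_, ?_, ?_⟩
      · rw [hs, heq]
        have : insert2 (m+1) (m :: (m-2) :: (m-1) :: (F ++ [1])) = m :: (m+1) :: (m-2) :: (m-1) :: (F ++ [1]) := rfl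
        rw [this]
        simp only [Prod.mk.injEq]
        constructor
        · simp [show m+1-1 = m by omega]
        · simp [show m+1-2 = m-1 by omega, show m+1-1 = m by omega]
      · -- m+1 ∉ (m-2)::(m-1)::F
        intro hx
        simp only [List.mem_cons] at hx
        rcases hx with h | h | h
        · omega
        · omega
        · have : m+1 ≤ m := sPair_le m (m+1) (Or.inl (by rw [heq]; simp [h]))
          omega
      · intro hx
        simp [show m+1-1 = m by omega] at hx
        rcases hx with h | h | h
        · omega
        · omega
        · exact f1 h
      · intro hx
        have : m+1 ≤ m := sPair_le m (m+1) (Or.inr (by rw [heq]; simp [hx]))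
        omega
      · simpa [show m+1-1 = m by omega] using f3
      · simpa [show m+1-2 = m-1 by omega] using f4
      · simp [show m+1-2 = m-1 by omega, show m+1-1 = m by omega]
        tauto
    · -- m+1 even, m odd ≥ 3
      intro hpar
      have hmo : m % 2 = 1 := by omega
      obtain ⟨F, Q', heq, f1, f2, f3, f4, f5, f6⟩ := ih.1 hmo
      rw [hmo] at hs; simp only [if_pos rfl] at hs
      refine ⟨F, (m-2) :: (m-1) :: Q', ?_, ?_, ?_, ?_, ?_, ?_, ?_⟩
      · rw [hs, heq]
        have : insert2 (m+1) (m :: (m-2) :: (m-1) :: Q') = m :: (m+1) :: (m-2) :: (m-1) :: Q' := rfl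
        rw [this]
        simp [show m+1-1 = m by omega, show m+1-2 = m-1 by omega]
      · intro hx
        have : m+1 ≤ m := sPair_le m (m+1) (Or.inl (by rw [heq]; simp [hx]))
        omega
      · simpa [show m+1-1 = m by omega] using f1
      · intro hx
        simp at hx
        rcases hx with h | h | h
        · omega
        · omega
        · have : m+1 ≤ m := sPair_le m (m+1) (Or.inr (by rw [heq]; simp [h]))
          omega
      · intro hx
        simp [show m+1-1 = m by omega] at hx
        rcases hx with h | h | h
        · omega
        · omega
        · exact f3 h
      · simp [show m+1-2 = m-1 by omega]
      · simpa [show m+1-2 = m-1 by omega, show m+1-1 = m by omega] using f6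

lemma mem_of_f2 {v N : ℕ} {X : List ℕ} (h : X.filter (fun a => a == v || a == N) = [v]) :
    v ∈ X := by
  have : v ∈ X.filter (fun a => a == v || a == N) := by rw [h]; simp
  exact (List.mem_filter.mp this).1

lemma not_mem_of_f2 {v N : ℕ} {X : List ℕ} (h : X.filter (fun a => a == v || a == N) = []) :
    v ∉ X := by
  intro hv
  have : v ∈ X.filter (fun a => a == v || a == N) := List.mem_filter.mpr ⟨hv, by simp⟩
  rw [h] at this
  simp at this

lemma pattern_exact {N v : ℕ} {u A B C : List ℕ} (hu : u = A ++ N :: (B ++ N :: C))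
    (hA : N ∉ A) (hB : N ∉ B) {w₁ w₂ w₃ : List ℕ} (h1 : N ∉ w₁) (h2 : N ∉ w₂)
    (h : proj2 u v N = w₁ ++ N :: (w₂ ++ N :: w₃)) :
    A.filter (fun a => a == v || a == N) = w₁ ∧ B.filter (fun a => a == v || a == N) = w₂ ∧
      C.filter (fun a => a == v || a == N) = w₃ := by
  subst hu
  rw [proj2] at h
  have hsplit : (A ++ N :: (B ++ N :: C)).filter (fun a => a == v || a == N) =
      A.filter (fun a => a == v || a == N) ++ N :: (B.filter (fun a => a == v || a == N)
        ++ N :: C.filter (fun a => a == v || a == N)) := by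
    simp [List.filter_append]
  rw [hsplit] at h
  exact piece_split (fun hm => hA ((List.mem_filter.mp hm).1)) h1
    (fun hm => hB ((List.mem_filter.mp hm).1)) h2 h

lemma pattern_cases {N v : ℕ} {u A B C : List ℕ} (hu : u = A ++ N :: (B ++ N :: C))
    (hvN : v ≠ N) (hA : N ∉ A) (hB : N ∉ B)
    (h : proj2 u v N = [v, N, v, N] ∨ proj2 u v N = [N, v, N, v]) :
    (A.filter (fun a => a == v || a == N) = [v] ∧ B.filter (fun a => a == v || a == N) = [v] ∧
      C.filter (fun a => a == v || a == N) = []) ∨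
    (A.filter (fun a => a == v || a == N) = [] ∧ B.filter (fun a => a == v || a == N) = [v] ∧
      C.filter (fun a => a == v || a == N) = [v]) := by
  rcases h with h | h
  · exact Or.inl (pattern_exact hu hA hB (w₁ := [v]) (w₂ := [v]) (w₃ := [])
      (by simpa using Ne.symm hvN) (by simpa using Ne.symm hvN) (by simpa using h))
  · exact Or.inr (pattern_exact hu hA hB (w₁ := []) (w₂ := [v]) (w₃ := [v])
      (by simp) (by simpa using Ne.symm hvN) (by simpa using h))


/-- Implication (iii) → (iv) of Proposition 4.2: a word `u` in `x₁,…,xₙ` (`n ≥ 3`) in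
which every variable occurs exactly twice, with `u[x₁,x₂,x₃] = (x₂x₃x₁)(x₃x₁x₂)`,
whose two-variable projections satisfy the stated conditions, equals `S n`. -/
theorem sW_unique (n : ℕ) (hn : 3 ≤ n) (u : List ℕ)
    (hvars : ∀ a ∈ u, 1 ≤ a ∧ a ≤ n)
    (hocc : ∀ i : ℕ, 1 ≤ i → i ≤ n → u.count i = 2)
    (h123 : u.filter (fun a => a == 1 || a == 2 || a == 3) = [2, 3, 1, 3, 1, 2])
    (hodd : ∀ i : ℕ, 1 ≤ i → i < n → Odd i → proj2 u i (i+1) = [i+1, i, i, i+1])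
    (heven : ∀ i : ℕ, 2 ≤ i → i < n → Even i → proj2 u i (i+1) = [i, i+1, i+1, i])
    (h23 : ∀ i j : ℕ, 1 ≤ i → i < j → j ≤ n → (j - i = 2 ∨ j - i = 3) →
      proj2 u i j = [i, j, i, j] ∨ proj2 u i j = [j, i, j, i])
    (h1j : ∀ j : ℕ, 3 ≤ j → j ≤ n → Odd j →
      proj2 u 1 j = [1, j, 1, j] ∨ proj2 u 1 j = [j, 1, j, 1]) :
    u = sW n := by
  induction n, hn using Nat.le_induction generalizing u with
  | base =>
    have hall : ∀ a ∈ u, (a == 1 || a == 2 || a == 3) = true := by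
      intro a ha
      obtain ⟨h1, h2⟩ := hvars a ha
      simp only [Bool.or_eq_true, beq_iff_eq]
      omega
    have hu : u = [2, 3, 1, 3, 1, 2] := by
      rw [← h123]
      exact (List.filter_eq_self.mpr hall).symm
    rw [hu]
    rfl
  | succ n hn ih =>
    have hcN : u.count (n+1) = 2 := hocc (n+1) (by omega) le_rfl
    obtain ⟨A, B, C, hu, hnA, hnB, hnC⟩ := count_two_split hcN
    have hmemw : ∀ x, x ∈ A ++ (B ++ C) → x ∈ u ∧ x ≠ n+1 := by
      intro x hx
      simp only [List.mem_append] at hx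
      constructor
      · rw [hu]; simp only [List.mem_append, List.mem_cons]; tauto
      · rintro rfl; tauto
    have hproj : ∀ v j : ℕ, v ≠ n+1 → j ≠ n+1 → proj2 (A ++ (B ++ C)) v j = proj2 u v j := by
      intro v j hv hj
      have hf : (((n+1:ℕ) == v) || ((n+1:ℕ) == j)) = false := by
        simp only [Bool.or_eq_false_iff, beq_eq_false_iff_ne, ne_eq]
        exact ⟨fun e => hv e.symm, fun e => hj e.symm⟩
      rw [hu, proj2, proj2]
      simp [List.filter_append, hf]
    have hw : A ++ (B ++ C) = sW n := by
      apply ih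
      · intro a ha
        have h1 := hvars a (hmemw a ha).1
        have h2 := (hmemw a ha).2
        omega
      · intro i h1 h2
        have hcu := hocc i h1 (by omega)
        rw [hu] at hcu
        rw [List.count_append, List.count_cons_of_ne (by omega : (n+1 : ℕ) ≠ i),
          List.count_append, List.count_cons_of_ne (by omega : (n+1 : ℕ) ≠ i)] at hcu
        simpa [List.count_append] using hcu
      · have h3 := h123
        rw [hu] at h3
        have hf : (((n+1:ℕ) == 1) || ((n+1:ℕ) == 2) || ((n+1:ℕ) == 3)) = false := by
          simp only [Bool.or_eq_false_iff, beq_eq_false_iff_ne, ne_eq]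
          omega
        rw [List.filter_append, List.filter_cons_of_neg (by rw [hf]; simp),
          List.filter_append, List.filter_cons_of_neg (by rw [hf]; simp)] at h3
        simpa [List.filter_append] using h3
      · intro i h1 h2 h3
        rw [hproj i (i+1) (by omega) (by omega)]
        exact hodd i h1 (by omega) h3
      · intro i h1 h2 h3
        rw [hproj i (i+1) (by omega) (by omega)]
        exact heven i h1 (by omega) h3
      · intro i j h1 h2 h3 h4
        rw [hproj i j (by omega) (by omega)]
        exact h23 i j h1 h2 (by omega) h4
      · intro j h1 h2 h3
        rw [hproj 1 j (by omega) (by omega)]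
        exact h1j j h1 (by omega) h3
    by_cases hpar : n % 2 = 1
    · -- n odd, n+1 even
      obtain ⟨F, Q', heq, f1, f2, f3, f4, f5, f6⟩ := (facts n hn).1 hpar
      have hsw : sW n = ((n-1) :: n :: (F ++ [1])) ++ (n :: (n-2) :: (n-1) :: Q') := by
        rw [sW, heq]
      rw [hsw] at hw
      have hpn := hodd n (by omega) (by omega) (by rw [Nat.odd_iff]; exact hpar)
      have hex := pattern_exact (v := n) hu hnA hnB (w₁ := []) (w₂ := [n, n]) (w₃ := [])
        (by simp) (by intro h; simp at h) (by simpa using hpn)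
      have hnotA : n ∉ A := not_mem_of_f2 hex.1
      have hnotC : n ∉ C := not_mem_of_f2 hex.2.2
      have hAcase : A = [] ∨ A = [n-1] := by
        rcases A with _ | ⟨a, A'⟩
        · exact Or.inl rfl
        · rcases A' with _ | ⟨a', A''⟩
          · simp only [List.cons_append, List.cons.injEq] at hw
            exact Or.inr (by rw [hw.1])
          · exfalso
            simp only [List.cons_append, List.cons.injEq] at hw
            exact hnotA (by rw [← hw.2.1]; simp)
      have hCsuf : C <:+ (n-2) :: (n-1) :: Q' := by
        refine suffix_past (X := (n-1) :: n :: (F ++ [1])) (v := n) ?_ hnotC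
        exact ⟨A ++ B, by rw [List.append_assoc, hw]⟩
      have hc2 := pattern_cases (v := n-2) hu (by omega) hnA hnB
        (h23 (n-2) (n+1) (by omega) (by omega) le_rfl (by omega))
      have hn2C : (n-2) ∈ C := by
        rcases hc2 with ⟨hfA, _, _⟩ | ⟨_, _, hfC⟩
        · exfalso
          have hm : (n-2) ∈ A := mem_of_f2 hfA
          rcases hAcase with rfl | rfl
          · simp at hm
          · simp at hm; omega
        · exact mem_of_f2 hfC
      have hCeq : C = (n-2) :: (n-1) :: Q' := by
        rcases List.suffix_cons_iff.mp hCsuf with h | h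
        · exact h
        · exfalso
          have hm : (n-2) ∈ (n-1) :: Q' := h.subset hn2C
          simp at hm
          rcases hm with hm | hm
          · omega
          · exact f5 hm
      have hc1 := pattern_cases (v := n-1) hu (by omega) hnA hnB
        (h23 (n-1) (n+1) (by omega) (by omega) le_rfl (by omega))
      have hAnil : A = [] := by
        rcases hc1 with ⟨_, _, hfC⟩ | ⟨hfA, _, _⟩
        · exact absurd (by rw [hCeq]; simp : (n-1) ∈ C) (not_mem_of_f2 hfC)
        · rcases hAcase with h | h
          · exact h
          · exact absurd (by rw [h]; simp : (n-1) ∈ A) (not_mem_of_f2 hfA)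
      have hBeq : B = ((n-1) :: n :: (F ++ [1])) ++ [n] := by
        rw [hAnil, hCeq] at hw
        refine List.append_cancel_right (bs := (n-2) :: (n-1) :: Q') ?_
        simpa using hw
      rw [hu, hAnil, hBeq, hCeq]
      have hsw1 : sW (n+1) =
          ((n+1) :: ((n-1) :: n :: (F ++ [1]))) ++ (n :: (n+1) :: (n-2) :: (n-1) :: Q') := by
        rw [sW, sPair_succ n (by omega), if_pos hpar, heq]
        rfl
      rw [hsw1]
      simp
    · -- n even, n+1 odd
      have hpar' : n % 2 = 0 := by omega
      obtain ⟨F, G, heq, f1, f2, f3, f4, f5, f6⟩ := (facts n hn).2 hpar'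
      have hsw : sW n = (n :: (n-2) :: (n-1) :: (F ++ [1])) ++ ((n-1) :: n :: G) := by
        rw [sW, heq]
      rw [hsw] at hw
      have hpn := heven n (by omega) (by omega) (by rw [Nat.even_iff]; exact hpar')
      have hex := pattern_exact (v := n) hu hnA hnB (w₁ := [n]) (w₂ := []) (w₃ := [n])
        (by intro h; simp at h) (by simp) (by simpa using hpn)
      have hnInA : n ∈ A := mem_of_f2 hex.1
      have hnInC : n ∈ C := mem_of_f2 hex.2.2
      have hc1 := pattern_cases (v := n-1) hu (by omega) hnA hnB
        (h23 (n-1) (n+1) (by omega) (by omega) le_rfl (by omega))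
      have hc2 := pattern_cases (v := n-2) hu (by omega) hnA hnB
        (h23 (n-2) (n+1) (by omega) (by omega) le_rfl (by omega))
      have hcO := pattern_cases (v := 1) hu (by omega) hnA hnB
        (h1j (n+1) (by omega) le_rfl (by rw [Nat.odd_iff]; omega))
      obtain ⟨A', rfl⟩ : ∃ A', A = n :: A' := by
        rcases A with _ | ⟨a, A'⟩
        · simp at hnInA
        · have han : a = n := by
            simp only [List.cons_append, List.cons.injEq] at hw
            exact hw.1
          exact ⟨A', by rw [han]⟩
      rcases hc1 with ⟨hfA, hfB, hfC⟩ | ⟨hfA, hfB, hfC⟩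
      · exfalso
        have hnm1C : (n-1) ∉ C := not_mem_of_f2 hfC
        have hCs : C <:+ n :: G := by
          refine suffix_past (X := n :: (n-2) :: (n-1) :: (F ++ [1])) (v := n-1) ?_ hnm1C
          exact ⟨(n :: A') ++ B, by rw [List.append_assoc, hw]⟩
        have hCeq : C = n :: G := by
          rcases List.suffix_cons_iff.mp hCs with h | h
          · exact h
          · exact absurd (h.subset hnInC) f3
        have hn2C : (n-2) ∈ C := by rw [hCeq]; exact List.mem_cons_of_mem _ f5
        have hnm2A : (n-2) ∉ n :: A' := by
          rcases hc2 with ⟨_, _, hfC2⟩ | ⟨hfA2, _, _⟩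
          · exact absurd hn2C (not_mem_of_f2 hfC2)
          · exact not_mem_of_f2 hfA2
        have hm1A : (n-1) ∈ n :: A' := mem_of_f2 hfA
        have hm1A' : (n-1) ∈ A' := by
          rcases List.mem_cons.mp hm1A with h | h
          · omega
          · exact h
        obtain ⟨a', A'', rfl⟩ : ∃ a' A'', A' = a' :: A'' := by
          rcases A' with _ | ⟨a', A''⟩
          · simp at hm1A'
          · exact ⟨a', A'', rfl⟩
        simp only [List.cons_append, List.cons.injEq] at hw
        exact hnm2A (by rw [← hw.2.1]; simp)
      · have hnm1C : (n-1) ∈ C := mem_of_f2 hfC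
        have hCsuf : C <:+ (n :: (n-2) :: (n-1) :: (F ++ [1])) ++ ((n-1) :: n :: G) :=
          ⟨(n :: A') ++ B, by rw [List.append_assoc, hw]⟩
        have hQs : ((n-1) :: n :: G) <:+ (n :: (n-2) :: (n-1) :: (F ++ [1])) ++ ((n-1) :: n :: G) :=
          ⟨_, rfl⟩
        have hCeq : C = (n-1) :: n :: G := by
          rcases List.suffix_or_suffix_of_suffix hCsuf hQs with h | h
          · rcases List.suffix_cons_iff.mp h with h' | h'
            · exact h'
            · exfalso
              have hm := h'.subset hnm1C
              simp at hm
              rcases hm with hm | hm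
              · omega
              · exact f4 hm
          · obtain ⟨E, hE⟩ := h
            rcases eq_or_ne E [] with rfl | hEne
            · rw [← hE]; simp
            · exfalso
              obtain ⟨D, hD⟩ := hCsuf
              rw [← hE, ← List.append_assoc] at hD
              have hDE : D ++ E = n :: (n-2) :: (n-1) :: (F ++ [1]) :=
                List.append_cancel_right hD
              have h1E : 1 ∈ E :=
                last_mem_of_suffix (X := n :: (n-2) :: (n-1) :: F) (v := 1)
                  ⟨D, by rw [hDE]; simp⟩ hEne
              have h1f : 1 ∈ E.filter (fun a => a == 1 || a == n+1) :=
                List.mem_filter.mpr ⟨h1E, by simp⟩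
              have h2f : 1 ∈ ((n-1) :: n :: G).filter (fun a => a == 1 || a == n+1) :=
                List.mem_filter.mpr ⟨by simp [f6], by simp⟩
              have hlen1 : 0 < (E.filter (fun a => a == 1 || a == n+1)).length :=
                List.length_pos_of_mem h1f
              have hlen2 : 0 < (((n-1) :: n :: G).filter (fun a => a == 1 || a == n+1)).length :=
                List.length_pos_of_mem h2f
              rcases hcO with ⟨_, _, hfC1⟩ | ⟨_, _, hfC1⟩ <;>
              · have hlen := congrArg List.length hfC1
                rw [← hE, List.filter_append, List.length_append] at hlen
                simp only [List.length_cons, List.length_nil] at hlen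
                omega
        have hA'nil : A' = [] := by
          rcases A' with _ | ⟨a', A''⟩
          · rfl
          · exfalso
            simp only [List.cons_append, List.cons.injEq] at hw
            have ha' : a' = n-2 := hw.2.1
            rcases hc2 with ⟨_, _, hfC2⟩ | ⟨hfA2, _, _⟩
            · refine not_mem_of_f2 hfC2 ?_
              rw [hCeq]
              exact List.mem_cons_of_mem _ (List.mem_cons_of_mem _ f5)
            · exact not_mem_of_f2 hfA2 (by rw [← ha']; simp)
        subst hA'nil
        have hBeq : B = (n-2) :: (n-1) :: (F ++ [1]) := by
          refine List.append_cancel_right (bs := C) ?_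
          have hw' : B ++ C = (n-2) :: (n-1) :: ((F ++ [1]) ++ ((n-1) :: n :: G)) := by
            simpa using hw
          rw [hw', hCeq]
          simp
        rw [hu, hBeq, hCeq]
        have hsw1 : sW (n+1) =
            (n :: (n+1) :: (n-2) :: (n-1) :: (F ++ [1])) ++ ((n+1) :: (n-1) :: n :: G) := by
          rw [sW, sPair_succ n (by omega), if_neg (by omega), heq]
          rfl
        rw [hsw1]
        simp
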